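/- Let g : [0,∞) → ℝ be C¹ with g(0)=0 and g(r) > 0 for r > 0, and let v(y) = g(|y|) y/|y|. Suppose Ω ⊂ ℝ^n is bounded measurable, H = {y : y·p < t} is a halfspace, F_H is the fold map (identity on H, reflection across ∂H otherwise), and c ∈ ℝ^n satisfies c·p ≥ t (i.e., c ∉ H). Then ∫_Ω v(F_H(y) − c) dy ≠ 0 provided Ω \ ∂H has positive measure. -/

import Mathlib

open MeasureTheory
open scoped RealInnerProductSpace

/-- If the centering point c lies outside the open halfspace H = {y·p < t}, and the
bounded set Ω is not a.e. contained in the hyperplane ∂H, then the folded trial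
vector field has nonzero integral: ∫_Ω v(F_H(y) − c) dy ≠ 0.  Here
v(y) = g(|y|)y/|y| with g C¹, g(0) = 0 and g > 0 on (0,∞), and F_H is the fold map
fixing H and reflecting its complement across ∂H. -/
theorem fold_integral_ne_zero (n : ℕ) (hn : 2 ≤ n)
    (g : ℝ → ℝ) (hg : ContDiff ℝ 1 g) (hg0 : g 0 = 0) (hgpos : ∀ r > 0, 0 < g r)
    (v : EuclideanSpace ℝ (Fin n) → EuclideanSpace ℝ (Fin n))
    (hv : ∀ y, v y = (g ‖y‖ / ‖y‖) • y)
    (p : EuclideanSpace ℝ (Fin n)) (hp : ‖p‖ = 1) (t : ℝ)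
    (F : EuclideanSpace ℝ (Fin n) → EuclideanSpace ℝ (Fin n))
    (hF : ∀ y, F y = if ⟪y, p⟫ < t then y else y + (2 * (t - ⟪y, p⟫)) • p)
    (c : EuclideanSpace ℝ (Fin n)) (hc : t ≤ ⟪c, p⟫)
    (Ω : Set (EuclideanSpace ℝ (Fin n))) (hΩmeas : MeasurableSet Ω)
    (hΩbdd : Bornology.IsBounded Ω)
    (hΩpos : 0 < volume (Ω \ {y | ⟪y, p⟫ = t})) :
    (∫ y in Ω, v (F y - c)) ≠ 0 := by
  have hgnn : ∀ r : ℝ, 0 ≤ r → 0 ≤ g r := by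
    intro r hr
    rcases hr.eq_or_lt with h | h
    · simp [← h, hg0]
    · exact (hgpos r h).le
  -- rewrite F with a continuous formula
  have hFeq : F = fun y => y + (2 * min (t - ⟪y, p⟫) 0) • p := by
    funext y
    rw [hF]
    by_cases h : ⟪y, p⟫ < t
    · rw [if_pos h, min_eq_right (by linarith), mul_zero, zero_smul, add_zero]
    · rw [if_neg h, min_eq_left (by push_neg at h; linarith)]
  have hip : (⟪p, p⟫ : ℝ) = 1 := by
    rw [real_inner_self_eq_norm_sq, hp]; norm_num
  have hFip : ∀ y, (⟪F y, p⟫ : ℝ) = ⟪y, p⟫ + 2 * min (t - ⟪y, p⟫) 0 := by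
    intro y
    rw [hFeq]
    rw [inner_add_left, real_inner_smul_left, hip, mul_one]
  -- norm of v
  have hnormv : ∀ x : EuclideanSpace ℝ (Fin n), ‖v x‖ = |g ‖x‖| := by
    intro x
    rw [hv, norm_smul]
    by_cases hx : x = 0
    · simp [hx, hg0]
    · have hne : ‖x‖ ≠ 0 := norm_ne_zero_iff.mpr hx
      rw [Real.norm_eq_abs, abs_div, abs_norm, div_mul_cancel₀ _ hne]
  -- continuity of v
  have hvcont : Continuous v := by
    rw [continuous_iff_continuousAt]
    intro x
    by_cases hx : x = 0
    · subst hx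
      have hv0 : v 0 = 0 := by simp [hv]
      unfold ContinuousAt
      rw [hv0, tendsto_zero_iff_norm_tendsto_zero]
      have h2 : Filter.Tendsto (fun y : EuclideanSpace ℝ (Fin n) => |g ‖y‖|)
          (nhds 0) (nhds 0) := by
        have hc1 : Continuous fun y : EuclideanSpace ℝ (Fin n) => |g ‖y‖| :=
          (hg.continuous.comp continuous_norm).abs
        have := hc1.tendsto (0 : EuclideanSpace ℝ (Fin n))
        simpa [hg0] using this
      exact h2.congr (fun y => (hnormv y).symm)
    · have hne : ‖x‖ ≠ 0 := norm_ne_zero_iff.mpr hx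
      have hveq : v = fun y => (g ‖y‖ / ‖y‖) • y := funext hv
      rw [hveq]
      exact (((hg.continuous.comp continuous_norm).continuousAt).div
        continuous_norm.continuousAt hne).smul continuousAt_id
  have hFcont : Continuous F := by
    rw [hFeq]
    fun_prop
  have hφcont : Continuous fun y => v (F y - c) :=
    hvcont.comp (hFcont.sub continuous_const)
  have hK : IsCompact (closure Ω) := hΩbdd.isCompact_closure
  have hint : IntegrableOn (fun y => v (F y - c)) Ω volume :=
    (hφcont.continuousOn.integrableOn_compact hK).mono_set subset_closure
  -- inner products with p
  have hzp : ∀ y, (⟪F y - c, p⟫ : ℝ) ≤ 0 := by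
    intro y
    rw [inner_sub_left, hFip]
    rcases le_or_gt (t - ⟪y, p⟫) 0 with h | h
    · rw [min_eq_left h]; linarith
    · rw [min_eq_right h.le]; linarith
  have hzp' : ∀ y, ⟪y, p⟫ ≠ t → (⟪F y - c, p⟫ : ℝ) < 0 := by
    intro y hy
    rw [inner_sub_left, hFip]
    rcases le_or_gt (t - ⟪y, p⟫) 0 with h | h
    · rw [min_eq_left h]
      have : t < ⟪y, p⟫ := by
        rcases h.eq_or_lt with h' | h'
        · exact absurd (by linarith) hy
        · linarith
      linarith
    · rw [min_eq_right h.le]; linarith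
  have key1 : ∀ y, (⟪v (F y - c), p⟫ : ℝ) ≤ 0 := by
    intro y
    rw [hv, real_inner_smul_left]
    exact mul_nonpos_iff.mpr (Or.inl ⟨div_nonneg (hgnn _ (norm_nonneg _)) (norm_nonneg _), hzp y⟩)
  have key2 : ∀ y, ⟪y, p⟫ ≠ t → (⟪v (F y - c), p⟫ : ℝ) < 0 := by
    intro y hy
    have hlt := hzp' y hy
    have hz : F y - c ≠ 0 := by
      intro h0
      rw [h0] at hlt
      simp at hlt
    rw [hv, real_inner_smul_left]
    exact mul_neg_of_pos_of_neg
      (div_pos (hgpos _ (norm_pos_iff.mpr hz)) (norm_pos_iff.mpr hz)) hlt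
  -- the scalar integrand
  set f : EuclideanSpace ℝ (Fin n) → ℝ := fun y => ⟪v (F y - c), p⟫ with hfdef
  have hfcont : Continuous f := hφcont.inner continuous_const
  have hfint : IntegrableOn f Ω volume :=
    (hfcont.continuousOn.integrableOn_compact hK).mono_set subset_closure
  have hint2 : IntegrableOn (fun y => -f y) Ω volume := hfint.neg
  have hpos : 0 < ∫ y in Ω, (-f y) := by
    rw [setIntegral_pos_iff_support_of_nonneg_ae
      (Filter.Eventually.of_forall fun y => by simpa using key1 y) hint2]
    refine lt_of_lt_of_le hΩpos (measure_mono ?_)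
    intro y hy
    refine ⟨?_, hy.1⟩
    have := key2 y hy.2
    simp only [Function.mem_support]
    intro h0
    rw [neg_eq_zero] at h0
    exact this.ne h0
  intro hG
  have hinner : ∫ y in Ω, (⟪p, v (F y - c)⟫ : ℝ) = ⟪p, ∫ y in Ω, v (F y - c)⟫ :=
    integral_inner hint p
  rw [hG, inner_zero_right] at hinner
  have hfeq : ∫ y in Ω, f y = 0 := by
    rw [← hinner]
    exact setIntegral_congr_fun hΩmeas fun y _ => real_inner_comm _ _
  rw [integral_neg, hfeq, neg_zero] at hpos
  exact lt_irrefl 0 hpos
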